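/- Let T : 𝔸 → 𝔸 be a bi-measurable bijection of the semi-infinite cylinder which preserves Lebesgue measure, and let ℰ(T) = {p ∈ 𝔸 : the second coordinate of T^n(p) tends to ∞ as n → ∞}. Then ℰ(T) is T-invariant and its Lebesgue measure is either zero or infinite. -/

import Mathlib

open MeasureTheory Filter Set

noncomputable section

local instance : Fact ((0:ℝ) < 2 * Real.pi) := ⟨by positivity⟩

/-- The circle `ℝ/2πℤ`. -/
abbrev Torus : Type := AddCircle (2 * Real.pi)

/-- The semi-infinite cylinder `𝔸 = 𝕋¹ × (0,∞)`. -/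
def Cyl : Set (Torus × ℝ) := (Set.univ : Set Torus) ×ˢ Set.Ioi (0 : ℝ)

/-- The escaping set of a map of the cylinder. -/
def escaping (F : Torus × ℝ → Torus × ℝ) : Set (Torus × ℝ) :=
  {p | p ∈ Cyl ∧ Tendsto (fun n : ℕ => ((F^[n]) p).2) atTop atTop}

lemma measurableSet_Cyl : MeasurableSet Cyl :=
  MeasurableSet.univ.prod measurableSet_Ioi

lemma measurableSet_escaping {F : Torus × ℝ → Torus × ℝ} (hF : Measurable F) :
    MeasurableSet (escaping F) := by
  have h1 : MeasurableSet {p : Torus × ℝ | Tendsto (fun n : ℕ => ((F^[n]) p).2) atTop atTop} :=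
    measurableSet_tendsto atTop (fun n => (hF.iterate n).snd)
  exact measurableSet_Cyl.inter h1

/-- The escaping set of a bi-measurable measure-preserving bijection of the cylinder is
invariant, and it has either zero or infinite Lebesgue measure. -/
theorem escaping_set_invariant_and_zero_or_infinite_measure
    (T S : Torus × ℝ → Torus × ℝ)
    (hbij : Set.BijOn T Cyl Cyl)
    (hmeasT : Measurable T) (hmeasS : Measurable S)
    (hinv : Set.InvOn S T Cyl Cyl)
    (hmp : MeasurePreserving T (volume.restrict Cyl) (volume.restrict Cyl)) :
    T '' escaping T = escaping T ∧
      (volume (escaping T) = 0 ∨ volume (escaping T) = ⊤) := by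
  set E := escaping T with hE
  have hEsub : E ⊆ Cyl := fun p hp => hp.1
  -- invariance
  have himg : T '' E = E := by
    apply Subset.antisymm
    · rintro _ ⟨p, hp, rfl⟩
      refine ⟨hbij.mapsTo hp.1, ?_⟩
      have : (fun n : ℕ => ((T^[n]) (T p)).2) = fun n : ℕ => ((T^[n+1]) p).2 := by
        funext n; rw [Function.iterate_succ_apply]
      rw [this]
      exact hp.2.comp (tendsto_add_atTop_nat 1)
    · intro q hq
      obtain ⟨p, hpC, hpq⟩ := hbij.surjOn hq.1
      refine ⟨p, ⟨hpC, ?_⟩, hpq⟩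
      rw [← tendsto_add_atTop_iff_nat 1]
      have : (fun n : ℕ => ((T^[n+1]) p).2) = fun n : ℕ => ((T^[n]) q).2 := by
        funext n; rw [Function.iterate_succ_apply, hpq]
      rw [this]
      exact hq.2
  refine ⟨himg, ?_⟩
  -- measure part
  rcases eq_or_ne (volume E) ⊤ with htop | hfin
  · exact Or.inr htop
  left
  have hEmeas : MeasurableSet E := measurableSet_escaping hmeasT
  -- T maps E into E and preimages of subsets of E within Cyl lie in E
  have hback : ∀ A ⊆ E, T ⁻¹' A ∩ Cyl = T ⁻¹' A ∩ E := by
    intro A hA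
    ext p
    simp only [mem_inter_iff, mem_preimage]
    refine ⟨fun ⟨h1, h2⟩ => ⟨h1, ?_⟩, fun ⟨h1, h2⟩ => ⟨h1, hEsub h2⟩⟩
    have : T p ∈ E := hA h1
    rw [← himg] at this
    obtain ⟨q, hq, hq2⟩ := this
    exact (hbij.injOn h2 (hEsub hq) hq2.symm) ▸ hq
  set μ := volume.restrict E with hμ
  have hfinμ : IsFiniteMeasure μ := by
    constructor
    rw [hμ, Measure.restrict_apply_univ]
    exact lt_top_iff_ne_top.mpr hfin
  have hmpE : MeasurePreserving T μ μ := by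
    refine ⟨hmeasT, ?_⟩
    ext A hA
    rw [Measure.map_apply hmeasT hA, hμ, Measure.restrict_apply hA,
      Measure.restrict_apply (hmeasT hA)]
    have e1 : T ⁻¹' A ∩ E = T ⁻¹' (A ∩ E) ∩ E := by
      ext p
      simp only [mem_inter_iff, mem_preimage, mem_inter_iff]
      constructor
      · rintro ⟨h1, h2⟩
        exact ⟨⟨h1, himg ▸ mem_image_of_mem T h2⟩, h2⟩
      · rintro ⟨⟨h1, _⟩, h2⟩; exact ⟨h1, h2⟩
    rw [e1, ← hback (A ∩ E) inter_subset_right]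
    have := hmp.measure_preimage (hA.inter hEmeas).nullMeasurableSet
    rw [Measure.restrict_apply (hA.inter hEmeas), Measure.restrict_apply
      (hmeasT (hA.inter hEmeas))] at this
    rw [this, inter_eq_self_of_subset_left (inter_subset_right.trans hEsub)]
  have hcons : Conservative T μ := hmpE.conservative
  -- each bounded part of E is null
  have hnull : ∀ m : ℕ, volume (E ∩ {p : Torus × ℝ | p.2 ≤ m}) = 0 := by
    intro m
    set s := E ∩ {p : Torus × ℝ | p.2 ≤ m} with hs
    have hsm : MeasurableSet s := hEmeas.inter (measurable_snd measurableSet_Iic)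
    have hae := hcons.ae_mem_imp_frequently_image_mem hsm.nullMeasurableSet
    have hμs : μ s = 0 := by
      by_contra h0
      -- there exists x in s satisfying the recurrence, but every point of s escapes
      have : μ (s ∩ {x | x ∈ s → ∃ᶠ n in atTop, T^[n] x ∈ s}) = μ s := by
        refine measure_congr (inter_eventuallyEq_left.2 ?_)
        filter_upwards [hae] with x hx _ using hx
      obtain ⟨x, hxs, hx⟩ := nonempty_of_measure_ne_zero (this ▸ h0)
      have hfreq : ∃ᶠ n in atTop, ((T^[n]) x).2 ≤ m := by
        apply (hx hxs).mono
        intro n hn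
        exact hn.2
      have hev : ∀ᶠ n in atTop, (m : ℝ) < ((T^[n]) x).2 :=
        hxs.1.2.eventually (eventually_gt_atTop (m:ℝ))
      obtain ⟨n, h1, h2⟩ := (hfreq.and_eventually hev).exists
      exact absurd h1 (not_le.mpr h2)
    rw [hμ, Measure.restrict_apply hsm] at hμs
    rwa [inter_eq_self_of_subset_left inter_subset_left] at hμs
  -- E is covered by the bounded parts
  have hcover : E ⊆ ⋃ m : ℕ, E ∩ {p : Torus × ℝ | p.2 ≤ m} := by
    intro p hp
    obtain ⟨m, hm⟩ := exists_nat_ge p.2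
    exact mem_iUnion.mpr ⟨m, hp, hm⟩
  refine le_antisymm ?_ (zero_le)
  calc volume E ≤ volume (⋃ m : ℕ, E ∩ {p : Torus × ℝ | p.2 ≤ m}) := measure_mono hcover
    _ ≤ ∑' m : ℕ, volume (E ∩ {p : Torus × ℝ | p.2 ≤ m}) := measure_iUnion_le _
    _ = 0 := by simp [hnull]

end
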